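/- An argument ⟨Γ, Δ⟩ between finite sets of formulas is {1}-symmetric valid (no probability distribution gives every premise probability 1 and every conclusion probability 0) if and only if it is classically valid. -/

import Mathlib

/-- Propositional formulas: atoms, negation, disjunction. -/
inductive Fml : Type
  | atom : ℕ → Fml
  | neg : Fml → Fml
  | or : Fml → Fml → Fml
deriving DecidableEq

namespace Fml

def and (φ ψ : Fml) : Fml := neg (or (neg φ) (neg ψ))

def bot : Fml := and (atom 0) (neg (atom 0))

def imp (φ ψ : Fml) : Fml := or (neg φ) ψ

def eval (v : ℕ → Bool) : Fml → Bool
  | atom n => v n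
  | neg φ => !(eval v φ)
  | or φ ψ => (eval v φ) || (eval v ψ)

end Fml

/-- Two formulas are jointly classically unsatisfiable. -/
def Incompatible (φ ψ : Fml) : Prop :=
  ∀ v : ℕ → Bool, ¬(φ.eval v = true ∧ ψ.eval v = true)

/-- Classical (Set-Set) validity. -/
def ClValid (Γ Δ : Finset Fml) : Prop :=
  ∀ v : ℕ → Bool, (∀ γ ∈ Γ, γ.eval v = true) → ∃ δ ∈ Δ, δ.eval v = true

/-- Classical single-conclusion entailment. -/
def ClEntails (Γ : Finset Fml) (φ : Fml) : Prop :=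
  ∀ v : ℕ → Bool, (∀ γ ∈ Γ, γ.eval v = true) → φ.eval v = true

def ClConsistent (Γ : Finset Fml) : Prop :=
  ∃ v : ℕ → Bool, ∀ γ ∈ Γ, γ.eval v = true

def Tautology (φ : Fml) : Prop := ∀ v : ℕ → Bool, φ.eval v = true

/-- A probability distribution on formulas. -/
structure ProbDist where
  p : Fml → ℝ
  nonneg : ∀ φ, 0 ≤ p φ
  le_one : ∀ φ, p φ ≤ 1
  bot_eq : p Fml.bot = 0
  neg_eq : ∀ φ, p (Fml.neg φ) = 1 - p φ
  add_eq : ∀ φ ψ, Incompatible φ ψ → p (Fml.or φ ψ) = p φ + p ψ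

/-- A probabilistic model: worlds with classical valuations and a finitely
additive probability measure on subsets of worlds. -/
structure PModel where
  W : Type
  nonempty : Nonempty W
  val : W → ℕ → Bool
  μ : Set W → ℝ
  nonneg : ∀ A : Set W, 0 ≤ μ A
  empty_eq : μ (∅ : Set W) = 0
  univ_eq : μ (Set.univ : Set W) = 1
  add_eq : ∀ A B : Set W, Disjoint A B → μ (A ∪ B) = μ A + μ B

/-- Denotation of a formula in a model. -/
def PModel.den (M : PModel) (φ : Fml) : Set M.W := {w | φ.eval (M.val w) = true}

/-- Induced probability of a formula in a model. -/
def PModel.prob (M : PModel) (φ : Fml) : ℝ := M.μ (M.den φ)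

/-- An upset of [0,1]: contains 1, excludes 0, upward closed within [0,1]. -/
def IsUpset (α : Set ℝ) : Prop :=
  α ⊆ Set.Icc 0 1 ∧ (1 : ℝ) ∈ α ∧ (0 : ℝ) ∉ α ∧
    ∀ x ∈ α, ∀ y ∈ Set.Icc (0:ℝ) 1, x ≤ y → y ∈ α

/-- The mirror image of α. -/
def mirror (α : Set ℝ) : Set ℝ := {x ∈ Set.Icc (0:ℝ) 1 | 1 - x ∈ α}

/-- The dual of α. -/
def dual (α : Set ℝ) : Set ℝ := Set.Icc (0:ℝ) 1 \ mirror α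

/-- Conjunction of a finite set of formulas. -/
noncomputable def conj (Γ : Finset Fml) : Fml := Γ.toList.foldr Fml.and (Fml.neg Fml.bot)

/-- Disjunction of a finite set of formulas. -/
noncomputable def disj (Δ : Finset Fml) : Fml := Δ.toList.foldr Fml.or Fml.bot

/-- Disjunction of a list of formulas. -/
def disjList (l : List Fml) : Fml := l.foldr Fml.or Fml.bot

/-- α-preservation validity (over probability distributions). -/
def PresValid (α : Set ℝ) (Γ Δ : Finset Fml) : Prop :=
  ∀ P : ProbDist, (∀ γ ∈ Γ, P.p γ ∈ α) → ∃ δ ∈ Δ, P.p δ ∈ α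

/-- α-preservation validity (over probabilistic models). -/
def PresValidM (α : Set ℝ) (Γ Δ : Finset Fml) : Prop :=
  ∀ M : PModel, (∀ γ ∈ Γ, M.prob γ ∈ α) → ∃ δ ∈ Δ, M.prob δ ∈ α

/-- α-symmetric validity. -/
def SymValid (α : Set ℝ) (Γ Δ : Finset Fml) : Prop :=
  ∀ P : ProbDist, (∀ γ ∈ Γ, P.p γ ∈ α) → ∃ δ ∈ Δ, P.p δ ∉ mirror α

/-- α-satisfiability of a finite set of formulas. -/
def Satis (α : Set ℝ) (Γ : Finset Fml) : Prop :=
  ∃ P : ProbDist, ∀ γ ∈ Γ, P.p γ ∈ α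


namespace ProbDist

lemma mono (P : ProbDist) {φ ψ : Fml}
    (h : ∀ v, φ.eval v = true → ψ.eval v = true) : P.p φ ≤ P.p ψ := by
  have hinc : Incompatible φ (Fml.neg ψ) := by
    rintro v ⟨h1, h2⟩
    simp only [Fml.eval, Bool.not_eq_true'] at h2
    have := h v h1
    simp [this] at h2
  have h1 := P.add_eq φ (Fml.neg ψ) hinc
  have h2 := P.le_one (Fml.or φ (Fml.neg ψ))
  rw [P.neg_eq] at h1
  linarith

lemma congr_eval (P : ProbDist) {φ ψ : Fml}
    (h : ∀ v, φ.eval v = ψ.eval v) : P.p φ = P.p ψ :=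
  le_antisymm (P.mono fun v hv => (h v ▸ hv))
    (P.mono fun v hv => ((h v).symm ▸ hv))

lemma subadd (P : ProbDist) (φ ψ : Fml) :
    P.p (Fml.or φ ψ) ≤ P.p φ + P.p ψ := by
  have hinc : Incompatible φ (Fml.and ψ (Fml.neg φ)) := by
    rintro v ⟨h1, h2⟩
    simp [Fml.and, Fml.eval, h1] at h2
  have heq : P.p (Fml.or φ ψ) = P.p (Fml.or φ (Fml.and ψ (Fml.neg φ))) := by
    apply P.congr_eval
    intro v
    simp only [Fml.and, Fml.eval]
    cases φ.eval v <;> cases ψ.eval v <;> rfl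
  have h1 := P.add_eq φ (Fml.and ψ (Fml.neg φ)) hinc
  have h2 : P.p (Fml.and ψ (Fml.neg φ)) ≤ P.p ψ := by
    apply P.mono
    intro v hv
    simp only [Fml.and, Fml.eval, Bool.not_eq_true'] at hv
    cases hψ : ψ.eval v
    · simp [hψ] at hv
    · rfl
  linarith

end ProbDist

private def andList (l : List Fml) : Fml := l.foldr Fml.and (Fml.neg Fml.bot)

private lemma eval_bot (v : ℕ → Bool) : Fml.bot.eval v = false := by
  simp [Fml.bot, Fml.and, Fml.eval]

private lemma eval_andList (v : ℕ → Bool) (l : List Fml) :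
    (andList l).eval v = true ↔ ∀ φ ∈ l, φ.eval v = true := by
  induction l with
  | nil => simp [andList, Fml.eval, eval_bot]
  | cons a l ih =>
    simp only [andList, List.foldr] at ih ⊢
    simp [Fml.and, Fml.eval, ih, Bool.not_eq_true', List.forall_mem_cons]

private lemma eval_disjList (v : ℕ → Bool) (l : List Fml) :
    (disjList l).eval v = true ↔ ∃ φ ∈ l, φ.eval v = true := by
  induction l with
  | nil => simp [disjList, eval_bot]
  | cons a l ih =>
    simp only [disjList, List.foldr] at ih ⊢
    simp [Fml.eval, ih]

private lemma p_andList_one (P : ProbDist) (l : List Fml)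
    (h : ∀ φ ∈ l, P.p φ = 1) : P.p (andList l) = 1 := by
  induction l with
  | nil =>
    show P.p (Fml.neg Fml.bot) = 1
    rw [P.neg_eq, P.bot_eq]; ring
  | cons a l ih =>
    have ha : P.p a = 1 := h a (by simp)
    have hl : P.p (andList l) = 1 := ih fun φ hφ => h φ (by simp [hφ])
    show P.p (Fml.and a (andList l)) = 1
    rw [Fml.and, P.neg_eq]
    have h1 := P.subadd (Fml.neg a) (Fml.neg (andList l))
    have h2 := P.nonneg (Fml.or (Fml.neg a) (Fml.neg (andList l)))
    rw [P.neg_eq, P.neg_eq, ha, hl] at h1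
    have : P.p (Fml.or (Fml.neg a) (Fml.neg (andList l))) = 0 := by linarith
    rw [this]; ring

private lemma p_disjList_zero (P : ProbDist) (l : List Fml)
    (h : ∀ φ ∈ l, P.p φ = 0) : P.p (disjList l) = 0 := by
  induction l with
  | nil => exact P.bot_eq
  | cons a l ih =>
    have ha : P.p a = 0 := h a (by simp)
    have hl : P.p (disjList l) = 0 := ih fun φ hφ => h φ (by simp [hφ])
    have h1 := P.subadd a (disjList l)
    have h2 := P.nonneg (Fml.or a (disjList l))
    show P.p (Fml.or a (disjList l)) = 0
    rw [ha, hl] at h1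
    linarith

/-- The indicator distribution of a valuation. -/
private def indDist (v : ℕ → Bool) : ProbDist where
  p φ := if φ.eval v = true then 1 else 0
  nonneg φ := by split <;> norm_num
  le_one φ := by split <;> norm_num
  bot_eq := by simp [eval_bot]
  neg_eq φ := by
    by_cases h : φ.eval v = true <;> simp [Fml.eval, h]
  add_eq φ ψ hinc := by
    have := hinc v
    by_cases h1 : φ.eval v = true <;> by_cases h2 : ψ.eval v = true <;>
      simp_all [Fml.eval]

/-- {1}-symmetric validity coincides with classical validity. -/
theorem stmt16 (Γ Δ : Finset Fml) :
    (¬ ∃ P : ProbDist, (∀ γ ∈ Γ, P.p γ = 1) ∧ ∀ δ ∈ Δ, P.p δ = 0) ↔ ClValid Γ Δ := by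
  constructor
  · intro h v hv
    by_contra hc
    push_neg at hc
    exact h ⟨indDist v, fun γ hγ => by simp [indDist, hv γ hγ],
      fun δ hδ => by simp [indDist, hc δ hδ]⟩
  · rintro hcl ⟨P, h1, h0⟩
    have hA : P.p (andList Γ.toList) = 1 :=
      p_andList_one P _ fun φ hφ => h1 φ (by simpa using hφ)
    have hD : P.p (disjList Δ.toList) = 0 :=
      p_disjList_zero P _ fun φ hφ => h0 φ (by simpa using hφ)
    have hm : P.p (andList Γ.toList) ≤ P.p (disjList Δ.toList) := by
      apply P.mono
      intro v hv
      rw [eval_andList] at hv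
      rw [eval_disjList]
      obtain ⟨δ, hδ, he⟩ := hcl v (fun γ hγ => hv γ (by simpa using hγ))
      exact ⟨δ, by simpa using hδ, he⟩
    rw [hA, hD] at hm
    linarith
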